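/- At a null point (n2 = 0) assume the background null junction conditions n^a[Y]_{ab} = 0 and P^{ab}[Y]_{ab} = 0 hold, together with the first-order null junction conditions: δn^b[Y]_{ab} + n^b[δY]_{ab} = 0, δP^{ab}[Y]_{ab} + P^{ab}[δY]_{ab} = 0, and δn2·P^{ac}[Y]_{bc} = 0. Apply a rigging transformation with gauge fields (λ ≠ 0, W, Z) satisfying Z(n) = 0 (the null-point constraint), so that the primed inverse data transforms by n' = n/λ (using n2 = 0), n2' = 0, P'^{ab} = P^{ab} − v^a n^b − v^b n^a with v^a = W n^a + P^{ab}Z_b, and the primed perturbed inverse data transforms by the formulas of Lemma 5.4 specialized to n2 = 0; assume further that [δY'] relates to [δY] by the first-order transformation law with common gauge fields on both sides. Then the primed first-order null junction conditions hold: δn'^b[Y']_{ab} + n'^b[δY']_{ab} = 0, δP'^{ab}[Y']_{ab} + P'^{ab}[δY']_{ab} = 0, and δn2'·P'^{ac}[Y']_{bc} = 0. -/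
import Mathlib


/-- Rigging independence of the junction conditions to first order at NULL points
(Prop. 6.8, pointwise index version): if the background and first-order null junction
conditions hold, they continue to hold after a rigging transformation with common gauge
fields on both sides. -/
theorem stmt_17
    (m : ℕ) (hm : 1 < m)
    (h P : Fin m → Fin m → ℝ) (l n : Fin m → ℝ) (l2 n2 : ℝ)
    (hsymm : ∀ a b, h a b = h b a)
    (Psymm : ∀ a b, P a b = P b a)
    (c1 : ∀ a b, (∑ c, P a c * h c b) + n a * l b = if a = b then (1 : ℝ) else 0)
    (c2 : ∀ a, (∑ b, P a b * l b) + l2 * n a = 0)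
    (c3 : (∑ a, n a * l a) + n2 * l2 = 1)
    (c4 : ∀ a, (∑ b, h a b * n b) + n2 * l a = 0)
    (hnull : n2 = 0)
    -- background jump [Y] and the background null junction conditions:
    (YB : Fin m → Fin m → ℝ) (YBsymm : ∀ a b, YB a b = YB b a)
    (hJ1 : ∀ b, (∑ a, n a * YB a b) = 0)
    (hJ2 : (∑ a, ∑ b, P a b * YB a b) = 0)
    -- perturbations of the inverse data and the jump [δY]:
    (δP : Fin m → Fin m → ℝ) (δPsymm : ∀ a b, δP a b = δP b a)
    (δn : Fin m → ℝ) (δn2 : ℝ)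
    (δY : Fin m → Fin m → ℝ) (δYsymm : ∀ a b, δY a b = δY b a)
    -- first-order null junction conditions:
    (hδJ1 : ∀ a, (∑ b, (δn b * YB a b + n b * δY a b)) = 0)
    (hδJ2 : (∑ a, ∑ b, (δP a b * YB a b + P a b * δY a b)) = 0)
    (hδJ3 : ∀ a b, δn2 * (∑ c, P a c * YB b c) = 0)
    -- gauge fields (common to both sides), with the null-point constraints:
    (lam : ℝ) (hlam : lam ≠ 0) (W : ℝ) (Z : Fin m → ℝ)
    (hZ : (∑ a, Z a * n a) = 0)
    (dlam dW : ℝ) (dZ : Fin m → ℝ) (hdZ : (∑ a, dZ a * n a) = 0) :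
    -- transformed quantities:
    let v : Fin m → ℝ := fun a => W * n a + ∑ b, P a b * Z b
    let dv : Fin m → ℝ := fun a => dW * n a + ∑ b, P a b * dZ b
    let n' : Fin m → ℝ := fun a => n a / lam
    let n2' : ℝ := n2 / lam ^ 2
    let P' : Fin m → Fin m → ℝ := fun a b => P a b - v a * n b - v b * n a
    let dn2' : ℝ := -2 * (dlam / lam ^ 3) * n2 + δn2 / lam ^ 2
    let dn' : Fin m → ℝ := fun a =>
      -(dlam / lam) * n' a + (1 / lam) * (δn a - n2 * dv a - v a * δn2)
    let dP' : Fin m → Fin m → ℝ := fun a b =>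
      δP a b + n2 * (dv a * v b + dv b * v a) - (n a * dv b + n b * dv a)
        + v a * v b * δn2 - (v a * δn b + v b * δn a)
    let Y' : Fin m → Fin m → ℝ := fun a b => lam * YB a b
    let dY' : Fin m → Fin m → ℝ := fun a b => lam * δY a b + dlam * YB a b
    -- primed first-order null junction conditions:
    (∀ a, (∑ b, (dn' b * Y' a b + n' b * dY' a b)) = 0) ∧
    ((∑ a, ∑ b, (dP' a b * Y' a b + P' a b * dY' a b)) = 0) ∧
    (∀ a b, dn2' * (∑ c, P' a c * Y' b c) = 0) := by
  subst hnull
  intro v dv n' n2' P' dn2' dn' dP' Y' dY'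
  -- helper facts
  have h1' : ∀ a, (∑ b, n b * YB a b) = 0 := by
    intro a
    have e : (∑ b, n b * YB a b) = ∑ b, n b * YB b a :=
      Finset.sum_congr rfl fun b _ => by rw [YBsymm]
    rw [e, hJ1]
  have hδJ1' : ∀ b, (∑ a, (δn a * YB a b + n a * δY a b)) = 0 := by
    intro b
    have e : (∑ a, (δn a * YB a b + n a * δY a b))
        = ∑ a, (δn a * YB b a + n a * δY b a) :=
      Finset.sum_congr rfl fun a _ => by rw [YBsymm, δYsymm]
    rw [e, hδJ1 b]
  have hK : ∀ a, δn2 * (∑ b, v b * YB a b) = 0 := by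
    intro a
    have hv : (∑ b, v b * YB a b)
        = W * (∑ b, n b * YB a b) + ∑ c, Z c * (∑ b, P c b * YB a b) := by
      calc (∑ b, v b * YB a b)
          = ∑ b, (W * (n b * YB a b) + ∑ c, Z c * (P c b * YB a b)) := by
            refine Finset.sum_congr rfl fun b _ => ?_
            simp only [v]
            rw [add_mul, Finset.sum_mul]
            congr 1
            · ring
            · refine Finset.sum_congr rfl fun c _ => ?_
              rw [Psymm]; ring
        _ = W * (∑ b, n b * YB a b) + ∑ b, ∑ c, Z c * (P c b * YB a b) := by
            rw [Finset.sum_add_distrib, ← Finset.mul_sum]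
        _ = W * (∑ b, n b * YB a b) + ∑ c, Z c * (∑ b, P c b * YB a b) := by
            rw [Finset.sum_comm]
            simp only [← Finset.mul_sum]
    rw [hv, h1' a, mul_add, Finset.mul_sum]
    have : ∀ c ∈ Finset.univ, δn2 * (Z c * (∑ b, P c b * YB a b)) = 0 := by
      intro c _
      have := hδJ3 c a
      linear_combination Z c * this
    rw [Finset.sum_eq_zero this]
    ring
  have hK2 : ∀ b, δn2 * (∑ a, v a * YB a b) = 0 := by
    intro b
    have e : (∑ a, v a * YB a b) = ∑ a, v a * YB b a :=
      Finset.sum_congr rfl fun a _ => by rw [YBsymm]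
    rw [e]; exact hK b
  refine ⟨?_, ?_, ?_⟩
  · -- first condition
    intro a
    have e : (∑ b, (dn' b * Y' a b + n' b * dY' a b))
        = ∑ b, ((δn b * YB a b + n b * δY a b) - δn2 * (v b * YB a b)) := by
      refine Finset.sum_congr rfl fun b _ => ?_
      simp only [dn', n', dY', Y']
      field_simp
      ring
    rw [e, Finset.sum_sub_distrib, hδJ1 a, ← Finset.mul_sum, hK a, sub_zero]
  · -- second condition
    set Xf : Fin m → Fin m → ℝ := fun a b =>
      lam * (δP a b * YB a b + P a b * δY a b) + dlam * (P a b * YB a b)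
      + (-(lam * dv a) - dlam * v a) * (n b * YB a b)
      + (lam * v a) * (δn2 * (v b * YB a b))
      + (-(lam * v a)) * (δn b * YB a b + n b * δY a b) with hXf
    set Yf : Fin m → Fin m → ℝ := fun a b =>
      (lam * dv b + dlam * v b) * (n a * YB a b)
      + (lam * v b) * (δn a * YB a b + n a * δY a b) with hYf
    have step1 : (∑ a, ∑ b, (dP' a b * Y' a b + P' a b * dY' a b))
        = (∑ a, ∑ b, Xf a b) - (∑ a, ∑ b, Yf a b) := by
      rw [← Finset.sum_sub_distrib]
      refine Finset.sum_congr rfl fun a _ => ?_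
      rw [← Finset.sum_sub_distrib]
      refine Finset.sum_congr rfl fun b _ => ?_
      simp only [dP', P', Y', dY', Xf, Yf]
      ring
    have stepX : (∑ a, ∑ b, Xf a b) = 0 := by
      have inner : ∀ a, (∑ b, Xf a b)
          = lam * (∑ b, (δP a b * YB a b + P a b * δY a b))
            + dlam * (∑ b, P a b * YB a b) := by
        intro a
        simp only [Xf]
        rw [Finset.sum_add_distrib, Finset.sum_add_distrib, Finset.sum_add_distrib,
          Finset.sum_add_distrib]
        simp only [← Finset.mul_sum]
        rw [h1' a, hK a, hδJ1 a]
        ring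
      calc (∑ a, ∑ b, Xf a b)
          = ∑ a, (lam * (∑ b, (δP a b * YB a b + P a b * δY a b))
              + dlam * (∑ b, P a b * YB a b)) :=
            Finset.sum_congr rfl fun a _ => inner a
        _ = lam * (∑ a, ∑ b, (δP a b * YB a b + P a b * δY a b))
              + dlam * (∑ a, ∑ b, P a b * YB a b) := by
            rw [Finset.sum_add_distrib, ← Finset.mul_sum, ← Finset.mul_sum]
        _ = 0 := by rw [hδJ2, hJ2]; ring
    have stepY : (∑ a, ∑ b, Yf a b) = 0 := by
      rw [Finset.sum_comm]
      refine Finset.sum_eq_zero fun x _ => ?_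
      simp only [Yf]
      rw [Finset.sum_add_distrib]
      simp only [← Finset.mul_sum]
      rw [hJ1 x, hδJ1' x]
      ring
    rw [step1, stepX, stepY, sub_zero]
  · -- third condition
    intro a b
    have hsplit : (∑ c, P' a c * Y' b c)
        = lam * (∑ c, P a c * YB b c) - (lam * v a) * (∑ c, n c * YB b c)
          - (lam * n a) * (∑ c, v c * YB b c) := by
      calc (∑ c, P' a c * Y' b c)
          = ∑ c, (lam * (P a c * YB b c) - (lam * v a) * (n c * YB b c)
              - (lam * n a) * (v c * YB b c)) := by
            refine Finset.sum_congr rfl fun c _ => ?_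
            simp only [P', Y']
            ring
        _ = _ := by
            rw [Finset.sum_sub_distrib, Finset.sum_sub_distrib,
              ← Finset.mul_sum, ← Finset.mul_sum, ← Finset.mul_sum]
    simp only [dn2']
    rw [hsplit, h1' b]
    have h3 := hδJ3 a b
    have hk : δn2 * (∑ c, v c * YB b c) = 0 := hK b
    have key : δn2 * (lam * (∑ c, P a c * YB b c) - lam * v a * 0
        - lam * n a * (∑ c, v c * YB b c)) = 0 := by
      linear_combination lam * h3 - (lam * n a) * hk
    linear_combination (1 / lam ^ 2) * key
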